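/- Let w ∈ ℝ³ and θ ∈ ℝ³ with ‖θ‖ = 1, and set b = √(1+‖w‖²), f = b + θ^T w, and A = I − f^{-1}(θ + (b+1)^{-1}w)w^T. Then A^T A = I − f^{-1}(wθ^T + θw^T). -/

import Mathlib

open Matrix

/-- `b = √(1+‖w‖²)`. -/
noncomputable def bOf (w : Fin 3 → ℝ) : ℝ := Real.sqrt (1 + w ⬝ᵥ w)

/-- `f = b + θᵀw`. -/
noncomputable def fOf (θ w : Fin 3 → ℝ) : ℝ := bOf w + θ ⬝ᵥ w

/-- `A = I − f⁻¹ (θ + (b+1)⁻¹ w) wᵀ`. -/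
noncomputable def AOf (θ w : Fin 3 → ℝ) : Matrix (Fin 3) (Fin 3) ℝ :=
  1 - (fOf θ w)⁻¹ • vecMulVec (θ + (bOf w + 1)⁻¹ • w) w

lemma vmv_transpose (a b : Fin 3 → ℝ) : (vecMulVec a b)ᵀ = vecMulVec b a := by
  ext i j; simp [vecMulVec_apply, mul_comm]

lemma vmv_mul (a b c d : Fin 3 → ℝ) :
    vecMulVec a b * vecMulVec c d = (b ⬝ᵥ c) • vecMulVec a d := by
  ext i j
  simp [mul_apply, vecMulVec_apply, dotProduct, Fin.sum_univ_three]
  ring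

/-- `AᵀA = I − f⁻¹ (wθᵀ + θwᵀ)`. -/
theorem ATA_eq (w θ : Fin 3 → ℝ) (hθ : Real.sqrt (θ ⬝ᵥ θ) = 1) :
    (AOf θ w)ᵀ * AOf θ w
      = 1 - (fOf θ w)⁻¹ • (vecMulVec w θ + vecMulVec θ w) := by
  have hww : (0:ℝ) ≤ w ⬝ᵥ w := by
    simp only [dotProduct]
    exact Finset.sum_nonneg fun i _ => mul_self_nonneg _
  have hb2 : bOf w ^ 2 = 1 + w ⬝ᵥ w := Real.sq_sqrt (by linarith)
  have hb1 : 1 ≤ bOf w := by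
    have : (0:ℝ) ≤ bOf w := Real.sqrt_nonneg _
    nlinarith [hb2]
  have hθ1 : θ ⬝ᵥ θ = 1 := by
    have := Real.sq_sqrt (by
      simp only [dotProduct]
      exact Finset.sum_nonneg fun i _ => mul_self_nonneg _ : (0:ℝ) ≤ θ ⬝ᵥ θ)
    rw [hθ] at this; linarith
  have hcs : (θ ⬝ᵥ w) ^ 2 ≤ (θ ⬝ᵥ θ) * (w ⬝ᵥ w) := by
    simp only [dotProduct, Fin.sum_univ_three]
    nlinarith [sq_nonneg (θ 0 * w 1 - θ 1 * w 0), sq_nonneg (θ 0 * w 2 - θ 2 * w 0),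
      sq_nonneg (θ 1 * w 2 - θ 2 * w 1)]
  have hf : 0 < fOf θ w := by
    rw [fOf]
    nlinarith [hb2, hcs, hθ1]
  have hfne : fOf θ w ≠ 0 := ne_of_gt hf
  have hbne : bOf w + 1 ≠ 0 := by linarith
  set b := bOf w with hbdef
  set f := fOf θ w with hfdef
  set c := f⁻¹ with hcdef
  set g := (b + 1)⁻¹ with hgdef
  set u := θ + g • w with hudef
  have huu : u ⬝ᵥ u = 2 * g * f := by
    have : u ⬝ᵥ u = θ ⬝ᵥ θ + 2 * g * (θ ⬝ᵥ w) + g ^ 2 * (w ⬝ᵥ w) := by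
      simp [hudef, dotProduct, Fin.sum_univ_three]
      ring
    rw [this, hθ1, hfdef, fOf, ← hbdef]
    have hw : w ⬝ᵥ w = b ^ 2 - 1 := by linarith [hb2]
    rw [hw, hgdef]
    field_simp
    ring
  have hAT : (AOf θ w)ᵀ = 1 - c • vecMulVec w u := by
    rw [AOf, transpose_sub, transpose_smul, transpose_one, vmv_transpose,
      ← hfdef, ← hbdef, ← hgdef, ← hcdef, ← hudef]
  have hA : AOf θ w = 1 - c • vecMulVec u w := by
    rw [AOf, ← hfdef, ← hbdef, ← hgdef, ← hcdef, ← hudef]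
  rw [hAT, hA]
  have expand : (1 - c • vecMulVec w u) * (1 - c • vecMulVec u w)
      = 1 - c • vecMulVec w u - c • vecMulVec u w
        + (c * c * (u ⬝ᵥ u)) • vecMulVec w w := by
    ext i j
    simp only [mul_apply, Matrix.sub_apply, Matrix.add_apply, Matrix.smul_apply, one_apply,
      vecMulVec_apply, dotProduct, Fin.sum_univ_three, smul_eq_mul]
    fin_cases i <;> fin_cases j <;> simp <;> ring
  rw [expand, huu]
  have hcf : c * f = 1 := inv_mul_cancel₀ hfne
  have hcoef : c * c * (2 * g * f) = 2 * (c * g) := by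
    calc c * c * (2 * g * f) = 2 * (c * g) * (c * f) := by ring
      _ = 2 * (c * g) := by rw [hcf, mul_one]
  rw [hcoef]
  have hwu : vecMulVec w u = vecMulVec w θ + g • vecMulVec w w := by
    ext i j; simp [hudef, vecMulVec_apply]; ring
  have huw : vecMulVec u w = vecMulVec θ w + g • vecMulVec w w := by
    ext i j; simp [hudef, vecMulVec_apply]; ring
  rw [hwu, huw]
  module
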